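/- arXiv:2007.08575 — 9 statements merged into one kernel-verified Lean document; each statement's English description precedes it below -/
import Mathlib

section
/- For any natural number n ≥ 1 and ρ = 1 - 1/√2, the number of vectors v ∈ ℕ^{2n-1} satisfying: (i) ‖v‖₁ ≤ n; (ii) v₁ = 0 implies v₂ = ⋯ = v_{2n-1} = 0; (iii) for each i ∈ {1,…,n-2}, v_{2i} = v_{2i+1} = 0 implies v_{2i+2} = ⋯ = v_{2n-1} = 0; is at most C · n · (2+√2)^n for some absolute constant C. -/
/-- Vectors `v ∈ ℕ^{2n-1}` (coordinates indexed `1,…,2n-1`, encoded as functions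
`ℕ → ℕ` vanishing outside `[1, 2n-1]`) satisfying:
(i) `‖v‖₁ ≤ n`;
(ii) `v₁ = 0` implies all coordinates vanish;
(iii) for each `i ∈ {1,…,n-2}`, `v_{2i} = v_{2i+1} = 0` implies
`v_j = 0` for all `j ≥ 2i+2`. -/
def DNPvec (n : ℕ) : Set (ℕ → ℕ) :=
  {v | (∀ j, j = 0 ∨ 2 * n - 1 < j → v j = 0) ∧
    (∑ j ∈ Finset.Icc 1 (2 * n - 1), v j) ≤ n ∧
    (v 1 = 0 → ∀ j, v j = 0) ∧
    (∀ i, 1 ≤ i → i ≤ n - 2 → v (2 * i) = 0 → v (2 * i + 1) = 0 →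
      ∀ j, 2 * i + 2 ≤ j → v j = 0)}

/-- (r s, S s) where r is the counting sequence, S its partial sums. -/
def rp : ℕ → ℕ × ℕ
  | 0 => (1, 0)
  | s+1 => ((rp s).2 + 3 * (rp s).1, (rp s).2 + (rp s).1)

lemma rp_pos (s : ℕ) : 1 ≤ (rp s).1 := by
  induction s with
  | zero => simp [rp]
  | succ s ih => simp only [rp]; omega

lemma S_eq (s : ℕ) : (rp s).2 = ∑ u ∈ Finset.range s, (rp u).1 := by
  induction s with
  | zero => simp [rp]
  | succ s ih => rw [Finset.sum_range_succ, ← ih]; rfl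

lemma r_key (s : ℕ) : 1 + ∑ u ∈ Finset.range s, (s + 1 - u) * (rp u).1 = (rp s).1 := by
  induction s with
  | zero => simp [rp]
  | succ s ih =>
    rw [Finset.sum_range_succ]
    have h1 : ∀ u ∈ Finset.range s, (s + 1 + 1 - u) * (rp u).1
        = (s + 1 - u) * (rp u).1 + (rp u).1 := by
      intro u hu
      simp only [Finset.mem_range] at hu
      have : s + 1 + 1 - u = (s + 1 - u) + 1 := by omega
      rw [this]; ring
    rw [Finset.sum_congr rfl h1, Finset.sum_add_distrib]
    have h2 : s + 1 + 1 - s = 2 := by omega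
    rw [h2, show (rp (s+1)).1 = (rp s).2 + 3 * (rp s).1 from rfl, S_eq]
    omega

/-- Finset of "good pair lists" with sum ≤ s. -/
def PF : ℕ → Finset (List (ℕ × ℕ))
  | 0 => {[]}
  | (s+1) => insert [] <|
      (Finset.Icc 1 (s+1)).attach.biUnion fun t =>
        (Finset.range (t.1 + 1)).biUnion fun b =>
          (PF (s + 1 - t.1)).image (fun l => (b, t.1 - b) :: l)
  termination_by s => s
  decreasing_by
    have := (Finset.mem_Icc.mp t.2).1
    omega

def sumP (L : List (ℕ × ℕ)) : ℕ := (L.map (fun p => p.1 + p.2)).sum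

lemma mem_PF : ∀ (L : List (ℕ × ℕ)) (s : ℕ), (∀ p ∈ L, 1 ≤ p.1 + p.2) →
    sumP L ≤ s → L ∈ PF s := by
  intro L
  induction L with
  | nil =>
    intro s _ _
    cases s with
    | zero => simp [PF]
    | succ s => simp [PF]
  | cons p t ih =>
    intro s hg hs
    obtain ⟨b, c⟩ := p
    have hbc : 1 ≤ b + c := hg (b, c) List.mem_cons_self
    have hsum : b + c + sumP t ≤ s := by
      simpa [sumP] using hs
    cases s with
    | zero => omega
    | succ s =>
      rw [PF]
      apply Finset.mem_insert_of_mem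
      rw [Finset.mem_biUnion]
      have htmem : b + c ∈ Finset.Icc 1 (s+1) := Finset.mem_Icc.mpr ⟨hbc, by omega⟩
      refine ⟨⟨b + c, htmem⟩, Finset.mem_attach _ _, ?_⟩
      show (b,c)::t ∈ (Finset.range (b+c+1)).biUnion
        fun b' => (PF (s+1-(b+c))).image (fun l => (b', (b+c) - b') :: l)
      rw [Finset.mem_biUnion]
      refine ⟨b, Finset.mem_range.mpr (by omega), ?_⟩
      rw [Finset.mem_image]
      refine ⟨t, ih _ (fun q hq => hg q (List.mem_cons_of_mem _ hq)) (by omega), ?_⟩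
      congr 2
      omega

lemma card_PF : ∀ s, (PF s).card ≤ (rp s).1 := by
  intro s
  induction s using Nat.strong_induction_on with
  | _ s ih =>
    match s with
    | 0 => simp [PF, rp]
    | (s+1) =>
      rw [PF]
      have h1 := Finset.card_insert_le ([] : List (ℕ × ℕ))
        ((Finset.Icc 1 (s+1)).attach.biUnion fun t =>
          (Finset.range (t.1 + 1)).biUnion fun b =>
            (PF (s + 1 - t.1)).image (fun l => (b, t.1 - b) :: l))
      refine h1.trans ?_
      have h2 : ((Finset.Icc 1 (s+1)).attach.biUnion fun t =>
          (Finset.range (t.1 + 1)).biUnion fun b =>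
            (PF (s + 1 - t.1)).image (fun l => (b, t.1 - b) :: l)).card
          ≤ ∑ t ∈ (Finset.Icc 1 (s+1)).attach, (t.1 + 1) * (rp (s + 1 - t.1)).1 := by
        refine (Finset.card_biUnion_le).trans ?_
        apply Finset.sum_le_sum
        intro t _
        refine (Finset.card_biUnion_le).trans ?_
        have : ∀ b ∈ Finset.range (t.1 + 1),
            ((PF (s + 1 - t.1)).image (fun l => (b, t.1 - b) :: l)).card
            ≤ (rp (s + 1 - t.1)).1 := by
          intro b _
          refine (Finset.card_image_le).trans ?_
          apply ih
          have := (Finset.mem_Icc.mp t.2).1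
          omega
        refine (Finset.sum_le_sum this).trans ?_
        rw [Finset.sum_const, Finset.card_range, smul_eq_mul]
      refine (Nat.add_le_add_right h2 1).trans ?_
      rw [Finset.sum_attach (Finset.Icc 1 (s+1)) (fun t => (t + 1) * (rp (s + 1 - t)).1)]
      have h3 : ∑ t ∈ Finset.Icc 1 (s+1), (t + 1) * (rp (s + 1 - t)).1
          = ∑ u ∈ Finset.range (s+1), (s + 1 + 1 - u) * (rp u).1 := by
        rw [← Finset.Ico_add_one_right_eq_Icc, Finset.sum_Ico_eq_sum_range,
          show s + 1 + 1 - 1 = s + 1 from by omega]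
        have href := Finset.sum_range_reflect (fun u => (s + 1 + 1 - u) * (rp u).1) (s+1)
        rw [← href]
        apply Finset.sum_congr rfl
        intro j hj
        simp only [Finset.mem_range] at hj
        rw [show 1 + j + 1 = s + 1 + 1 - (s + 1 - 1 - j) from by omega,
          show s + 1 - (1 + j) = s + 1 - 1 - j from by omega]
      rw [h3]
      have := r_key (s+1)
      omega

lemma sqrt2_ge_one : (1:ℝ) ≤ Real.sqrt 2 := by
  nlinarith [Real.sq_sqrt (by norm_num : (0:ℝ) ≤ 2), Real.sqrt_nonneg 2]

lemma r_rec (s : ℕ) : (rp (s+2)).1 + 2 * (rp s).1 = 4 * (rp (s+1)).1 := by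
  simp only [rp]; ring

lemma r_ratio (s : ℕ) : ((rp (s+1)).1 : ℝ) ≤ (2 + Real.sqrt 2) * (rp s).1 := by
  induction s with
  | zero =>
    simp [rp]
    nlinarith [sqrt2_ge_one]
  | succ s ih =>
    have hrec : ((rp (s+2)).1 : ℝ) + 2 * (rp s).1 = 4 * (rp (s+1)).1 := by
      exact_mod_cast congrArg (fun x : ℕ => (x : ℝ)) (r_rec s)
    have h1 : (0:ℝ) ≤ ((rp (s+1)).1 : ℝ) := by positivity
    have hs : Real.sqrt 2 ^ 2 = 2 := Real.sq_sqrt (by norm_num)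
    nlinarith [sqrt2_ge_one, ih, hrec, h1]

lemma r_le_pow (s : ℕ) : ((rp s).1 : ℝ) ≤ (2 + Real.sqrt 2) ^ s := by
  induction s with
  | zero => simp [rp]
  | succ s ih =>
    refine (r_ratio s).trans ?_
    rw [pow_succ, mul_comm ((2 + Real.sqrt 2)^s)]
    apply mul_le_mul_of_nonneg_left ih
    nlinarith [Real.sqrt_nonneg 2]

def Fc (p : ℕ × List (ℕ × ℕ)) : ℕ → ℕ := fun j =>
  if j = 0 then 0
  else if j = 1 then p.1 + 1
  else if j % 2 = 0 then (p.2.getD (j / 2 - 1) (0, 0)).1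
  else (p.2.getD (j / 2 - 1) (0, 0)).2

open scoped Classical in
noncomputable def Sfin (n : ℕ) : Finset (ℕ → ℕ) :=
  insert (fun _ => 0) ((Finset.range n ×ˢ PF (n - 1)).image Fc)

lemma card_Sfin (n : ℕ) : (Sfin n).card ≤ 1 + n * (rp (n-1)).1 := by
  classical
  have h1 : (Sfin n).card ≤ ((Finset.range n ×ˢ PF (n - 1)).image Fc).card + 1 := by
    rw [Sfin]; convert Finset.card_insert_le _ _ using 2
  have h2 : ((Finset.range n ×ˢ PF (n - 1)).image Fc).card ≤ n * (PF (n-1)).card := by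
    refine (Finset.card_image_le).trans ?_
    rw [Finset.card_product, Finset.card_range]
  have h3 := card_PF (n-1)
  have : n * (PF (n-1)).card ≤ n * (rp (n-1)).1 := Nat.mul_le_mul_left _ h3
  omega


lemma dnp_subset (n : ℕ) (hn : 1 ≤ n) : DNPvec n ⊆ ↑(Sfin n) := by
  classical
  intro v hv
  obtain ⟨hsupp, hsum, h1, h3⟩ := hv
  by_cases hv1 : v 1 = 0
  · have hz : v = fun _ => 0 := funext (h1 hv1)
    simp only [Sfin, Finset.coe_insert, Set.mem_insert_iff]
    exact Or.inl hz
  · set P : ℕ → Prop := fun k => ∀ i, 1 ≤ i → i ≤ k → 1 ≤ v (2*i) + v (2*i+1) with hP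
    have hP0 : P 0 := fun i h1i hi => by omega
    set m := Nat.findGreatest P (n-1) with hm
    have hm_le : m ≤ n - 1 := Nat.findGreatest_le _
    have hPm : P m := Nat.findGreatest_spec (Nat.zero_le _) hP0
    have hmax : ∀ k, m < k → k ≤ n-1 → ¬ P k := fun k h1k h2k =>
      Nat.findGreatest_is_greatest h1k h2k
    -- tail vanishes
    have htail : ∀ j, 2*m + 2 ≤ j → v j = 0 := by
      intro j hj
      by_cases hm2 : m < n - 1
      · have hnP : ¬ P (m+1) := hmax _ (by omega) (by omega)
        have hpair : v (2*(m+1)) = 0 ∧ v (2*(m+1)+1) = 0 := by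
          by_contra hc
          apply hnP
          intro i h1i hi
          rcases Nat.lt_or_ge i (m+1) with h | h
          · exact hPm i h1i (by omega)
          · have : i = m + 1 := by omega
            subst this
            omega
        rcases Nat.lt_or_ge j (2*m+4) with hj4 | hj4
        · -- j = 2m+2 or 2m+3
          rcases (by omega : j = 2*(m+1) ∨ j = 2*(m+1)+1) with rfl | rfl
          · exact hpair.1
          · exact hpair.2
        · by_cases hle : m + 1 ≤ n - 2
          · exact h3 (m+1) (by omega) hle hpair.1 hpair.2 j (by omega)
          · -- m + 1 = n - 1, so j ≥ 2n > 2n-1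
            exact hsupp j (Or.inr (by omega))
      · -- m = n - 1, j ≥ 2n
        exact hsupp j (Or.inr (by omega))
    have hv1' : 1 ≤ v 1 := Nat.one_le_iff_ne_zero.mpr hv1
    have hv1n : v 1 ≤ n := by
      have h1mem : 1 ∈ Finset.Icc 1 (2*n-1) := Finset.mem_Icc.mpr ⟨le_refl _, by omega⟩
      exact le_trans (Finset.single_le_sum (f := v) (fun i _ => Nat.zero_le _) h1mem) hsum
    set L : List (ℕ × ℕ) := List.ofFn (fun i : Fin m => (v (2*i.1+2), v (2*i.1+3))) with hL
    -- each pair of L is nonzero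
    have hgood : ∀ p ∈ L, 1 ≤ p.1 + p.2 := by
      intro p hp
      rw [hL, List.mem_ofFn] at hp
      obtain ⟨i, rfl⟩ := hp
      dsimp only
      have e1 : 2*i.1+2 = 2*(i.1+1) := by ring
      have e2 : 2*i.1+3 = 2*(i.1+1)+1 := by ring
      rw [e1, e2]
      exact hPm (i.1+1) (by omega) (by omega)
    -- sum bound
    have hsum_aux : ∀ m', v 1 + ∑ i ∈ Finset.range m', (v (2*i+2) + v (2*i+3))
        = ∑ j ∈ Finset.Icc 1 (2*m'+1), v j := by
      intro m'
      induction m' with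
      | zero => simp
      | succ m' ih =>
        have key : ∑ j ∈ Finset.Icc 1 (2*(m'+1)+1), v j
            = ∑ j ∈ Finset.Icc 1 (2*m'+1), v j + v (2*m'+2) + v (2*m'+3) := by
          rw [show 2*(m'+1)+1 = (2*m'+2)+1 from by ring]
          rw [Finset.sum_Icc_succ_top (show (1:ℕ) ≤ (2*m'+2)+1 by omega)]
          rw [show (2*m'+2) = (2*m'+1)+1 from by ring]
          rw [Finset.sum_Icc_succ_top (show (1:ℕ) ≤ (2*m'+1)+1 by omega)]
        rw [Finset.sum_range_succ, key, ← ih]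
        ring
    have hsumL : sumP L ≤ n - 1 := by
      have h1' : sumP L = ∑ i ∈ Finset.range m, (v (2*i+2) + v (2*i+3)) := by
        rw [hL, sumP, List.map_ofFn, List.sum_ofFn]
        simp only [Function.comp]
        exact Fin.sum_univ_eq_sum_range (fun i => v (2*i+2) + v (2*i+3)) m
      have h2' := hsum_aux m
      have h3' : ∑ j ∈ Finset.Icc 1 (2*m+1), v j ≤ ∑ j ∈ Finset.Icc 1 (2*n-1), v j :=
        Finset.sum_le_sum_of_subset (Finset.Icc_subset_Icc_right (by omega))
      omega
    -- decode equality
    have hFc : Fc (v 1 - 1, L) = v := by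
      funext j
      rcases Nat.eq_zero_or_pos j with rfl | hj0
      · simp only [Fc, if_pos rfl]
        exact (hsupp 0 (Or.inl rfl)).symm
      rcases eq_or_ne j 1 with rfl | hj1
      · simp only [Fc]
        norm_num
        omega
      have hj2 : 2 ≤ j := by omega
      have hlen : L.length = m := by rw [hL, List.length_ofFn]
      rcases Nat.lt_or_ge j (2*m+2) with hjm | hjm
      · -- j ≤ 2m+1 : list lookup
        have hidx : j / 2 - 1 < m := by omega
        have hidx' : j / 2 - 1 < L.length := by omega
        have hget : L.getD (j/2-1) (0,0) = (v (2*(j/2-1)+2), v (2*(j/2-1)+3)) := by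
          have hgen : ∀ (k : ℕ), k < m →
              (List.ofFn (fun i : Fin m => (v (2*i.1+2), v (2*i.1+3)))).getD k (0,0)
              = (v (2*k+2), v (2*k+3)) := by
            intro k hk
            rw [List.getD_eq_getElem _ _ (by simpa using hk)]
            simp
          exact hgen _ hidx
        simp only [Fc, hget]
        have hj0' : ¬ (j = 0) := by omega
        have hj1' : ¬ (j = 1) := by omega
        rw [if_neg hj0', if_neg hj1']
        by_cases hpar : j % 2 = 0
        · rw [if_pos hpar]
          exact congrArg v (by omega)
        · rw [if_neg hpar]
          exact congrArg v (by omega)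
      · -- j ≥ 2m+2 : default, v j = 0
        have hget : L.getD (j/2-1) (0,0) = (0,0) := by
          apply List.getD_eq_default
          omega
        simp only [Fc, hget]
        have hj0' : ¬ (j = 0) := by omega
        have hj1' : ¬ (j = 1) := by omega
        rw [if_neg hj0', if_neg hj1']
        have := htail j hjm
        by_cases hpar : j % 2 = 0
        · rw [if_pos hpar]; omega
        · rw [if_neg hpar]; omega
    -- membership
    simp only [Sfin, Finset.coe_insert, Set.mem_insert_iff]
    right
    rw [Finset.mem_coe, Finset.mem_image]
    refine ⟨(v 1 - 1, L), ?_, hFc⟩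
    rw [Finset.mem_product]
    constructor
    · rw [Finset.mem_range]; omega
    · exact mem_PF L (n-1) hgood hsumL

/-- The number of such vectors is at most `C · n · (2+√2)^n` for an absolute
constant `C`. -/
theorem stmt2 :
    ∃ C : ℝ, ∀ n : ℕ, 1 ≤ n →
      ((DNPvec n).ncard : ℝ) ≤ C * n * (2 + Real.sqrt 2) ^ n := by
  classical
  use 1
  intro n hn
  have hsub := dnp_subset n hn
  have h1 : (DNPvec n).ncard ≤ (Sfin n).card := by
    have := Set.ncard_le_ncard hsub (Sfin n).finite_toSet
    simpa [Set.ncard_coe_finset] using this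
  have h2 : (DNPvec n).ncard ≤ 1 + n * (rp (n-1)).1 := h1.trans (card_Sfin n)
  have hq0 : (0:ℝ) ≤ 2 + Real.sqrt 2 := by positivity
  have hq1 : (1:ℝ) ≤ 2 + Real.sqrt 2 := by nlinarith [Real.sqrt_nonneg 2]
  have hcast : ((DNPvec n).ncard : ℝ) ≤ 1 + (n : ℝ) * ((rp (n-1)).1 : ℝ) := by
    have := (Nat.cast_le (α := ℝ)).mpr h2
    push_cast at this
    linarith
  have h3 : ((rp (n-1)).1 : ℝ) ≤ (2 + Real.sqrt 2) ^ (n-1) := r_le_pow (n-1)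
  have hn1 : (1:ℝ) ≤ (n : ℝ) := by exact_mod_cast hn
  have hp1 : (1:ℝ) ≤ (2 + Real.sqrt 2) ^ (n-1) := one_le_pow₀ hq1
  have hpow : (2 + Real.sqrt 2) ^ n = (2 + Real.sqrt 2) ^ (n-1) * (2 + Real.sqrt 2) := by
    rw [← pow_succ]
    congr 1
    omega
  have : ((DNPvec n).ncard : ℝ) ≤ 1 + (n : ℝ) * (2 + Real.sqrt 2) ^ (n-1) := by
    have := mul_le_mul_of_nonneg_left h3 (by linarith : (0:ℝ) ≤ (n:ℝ))
    linarith
  rw [one_mul, hpow]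
  nlinarith [Real.sqrt_nonneg 2, mul_le_mul_of_nonneg_left hp1 (by linarith : (0:ℝ) ≤ (n:ℝ))]
end

section
/- Fix n ≥ 1 and t ∈ {1,…,n-1}. The number of vectors v ∈ ℕ^{2n-1} satisfying conditions (i)–(iii) below and additionally having t(v) = t (where t(v) is the largest t' ∈ {1,…,n-1} with v_{2t'} + v_{2t'+1} > 0) is at most (2+√2)^n. Conditions: (i) ‖v‖₁ ≤ n; (ii) v₁ = 0 implies all other coordinates are 0; (iii) for each i, v_{2i} = v_{2i+1} = 0 implies v_j = 0 for all j > 2i+1. -/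
/-- Auxiliary superset: support in `[1, 2t+1]`, coordinate sum at most `B`,
and all pairs `(v_{2i}, v_{2i+1})`, `1 ≤ i ≤ t`, nonzero. -/
def Avec (t B : ℕ) : Set (ℕ → ℕ) :=
  {v | (∀ j, j = 0 ∨ 2 * t + 1 < j → v j = 0) ∧
    (∑ j ∈ Finset.Icc 1 (2 * t + 1), v j) ≤ B ∧
    (∀ i, 1 ≤ i → i ≤ t → 0 < v (2 * i) + v (2 * i + 1))}

private lemma ncard_biUnion_le {α ι : Type*} (s : Finset ι) (f : ι → Set α) :
    (⋃ i ∈ s, f i).ncard ≤ ∑ i ∈ s, (f i).ncard := by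
  classical
  induction s using Finset.induction with
  | empty => simp
  | @insert a s ha ih =>
      rw [Finset.set_biUnion_insert, Finset.sum_insert ha]
      exact le_trans (Set.ncard_union_le _ _) (Nat.add_le_add_left ih _)

private lemma sqrt2_facts : (0:ℝ) < Real.sqrt 2 ∧ Real.sqrt 2 * Real.sqrt 2 = 2 :=
  ⟨Real.sqrt_pos.2 (by norm_num), Real.mul_self_sqrt (by norm_num)⟩

private lemma geom_bound (B : ℕ) :
    ∑ x ∈ Finset.range (B + 1), ((2 + Real.sqrt 2)⁻¹) ^ x ≤ Real.sqrt 2 := by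
  obtain ⟨hs, hs2⟩ := sqrt2_facts
  have hmul : (2 + Real.sqrt 2) * ((2 - Real.sqrt 2)/2) = 1 := by nlinarith
  have hrval : (2 + Real.sqrt 2)⁻¹ = (2 - Real.sqrt 2)/2 := inv_eq_of_mul_eq_one_right hmul
  set r : ℝ := (2 + Real.sqrt 2)⁻¹ with hr
  have hr0 : 0 < r := by rw [hrval]; nlinarith
  have hr1 : r < 1 := by rw [hrval]; nlinarith
  have hkey : Real.sqrt 2 * (1 - r) = 1 := by rw [hrval]; nlinarith
  rw [geom_sum_eq (by linarith : r ≠ 1)]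
  rw [div_le_iff_of_neg (by linarith : r - 1 < 0)]
  have hp : 0 ≤ r ^ (B+1) := by positivity
  nlinarith

private lemma Avec_finite_bound (t : ℕ) : ∀ B : ℕ, (Avec t B).Finite ∧
    ((Avec t B).ncard : ℝ) ≤ (2 + Real.sqrt 2) ^ B := by
  induction t with
  | zero =>
      intro B
      have hsub : Avec 0 B ⊆ (fun a : ℕ => fun j : ℕ => if j = 1 then a else 0) '' Set.Iic B := by
        rintro v ⟨hsupp, hsum, -⟩
        refine ⟨v 1, ?_, ?_⟩
        · simpa using hsum
        · funext j
          by_cases hj : j = 1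
          · simp [hj]
          · simp only [hj, if_false]
            exact (hsupp j (by omega)).symm
      have hfin : ((fun a : ℕ => fun j : ℕ => if j = 1 then a else 0) '' Set.Iic B).Finite :=
        (Set.finite_Iic B).image _
      refine ⟨hfin.subset hsub, ?_⟩
      have h1 : (Avec 0 B).ncard ≤ B + 1 := by
        calc (Avec 0 B).ncard ≤ _ := Set.ncard_le_ncard hsub hfin
          _ ≤ (Set.Iic B).ncard := Set.ncard_image_le (Set.finite_Iic B)
          _ = B + 1 := by
              rw [← Finset.coe_Iic, Set.ncard_coe_finset, Nat.card_Iic]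
      calc ((Avec 0 B).ncard : ℝ) ≤ (B:ℝ) + 1 := by exact_mod_cast h1
        _ ≤ 2 ^ B := by exact_mod_cast (Nat.lt_two_pow_self (n := B))
        _ ≤ (2 + Real.sqrt 2) ^ B := by
            apply pow_le_pow_left₀ (by norm_num)
            have := sqrt2_facts.1; linarith
  | succ t ih =>
      intro B
      classical
      set q : ℝ := 2 + Real.sqrt 2 with hq
      obtain ⟨hs, hs2⟩ := sqrt2_facts
      have hq1 : (1:ℝ) < q := by simp [hq]; linarith
      set P : Finset (ℕ × ℕ) := (Finset.range (B+1) ×ˢ Finset.range (B+1)).filter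
        (fun p => 0 < p.1 + p.2 ∧ p.1 + p.2 ≤ B) with hP
      set g : ℕ × ℕ → (ℕ → ℕ) → (ℕ → ℕ) := fun p w =>
        fun j => if j = 2*t+2 then p.1 else if j = 2*t+3 then p.2 else w j with hg
      have hsub : Avec (t+1) B ⊆ ⋃ p ∈ P, g p '' Avec t (B - (p.1 + p.2)) := by
        rintro v ⟨hsupp, hsum, hpairs⟩
        have hsplit : ∑ j ∈ Finset.Icc 1 (2*(t+1)+1), v j
            = (∑ j ∈ Finset.Icc 1 (2*t+1), v j) + v (2*t+2) + v (2*t+3) := by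
          have e1 : 2*(t+1)+1 = (2*t+2)+1 := by ring
          rw [e1, Finset.sum_Icc_succ_top (by omega), Finset.sum_Icc_succ_top (by omega)]
        have hsum' : (∑ j ∈ Finset.Icc 1 (2*t+1), v j) + v (2*t+2) + v (2*t+3) ≤ B := by
          rw [← hsplit]; exact hsum
        set p : ℕ × ℕ := (v (2*t+2), v (2*t+3)) with hp
        set w : ℕ → ℕ := fun j => if 2*t+1 < j then 0 else v j with hw
        have hpP : p ∈ P := by
          have h1 : 0 < v (2*(t+1)) + v (2*(t+1)+1) := hpairs (t+1) (by omega) le_rfl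
          have e2 : 2*(t+1) = 2*t+2 := by ring
          have e3 : 2*(t+1)+1 = 2*t+3 := by ring
          rw [e3, e2] at h1
          simp only [hP, Finset.mem_filter, Finset.mem_product, Finset.mem_range, hp]
          omega
        refine Set.mem_biUnion hpP ⟨w, ⟨?_, ?_, ?_⟩, ?_⟩
        · intro j hj
          rcases hj with hj | hj
          · simp only [hw]
            rw [if_neg (by omega)]
            exact hsupp j (Or.inl hj)
          · simp only [hw]; rw [if_pos hj]
        · have hww : ∑ j ∈ Finset.Icc 1 (2*t+1), w j = ∑ j ∈ Finset.Icc 1 (2*t+1), v j := by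
            apply Finset.sum_congr rfl
            intro j hj
            simp only [Finset.mem_Icc] at hj
            simp only [hw]; rw [if_neg (by omega)]
          have hp1 : p.1 = v (2*t+2) := by rw [hp]
          have hp2 : p.2 = v (2*t+3) := by rw [hp]
          omega
        · intro i hi1 hi2
          have e4 : w (2*i) = v (2*i) := by simp only [hw]; rw [if_neg (by omega)]
          have e5 : w (2*i+1) = v (2*i+1) := by simp only [hw]; rw [if_neg (by omega)]
          rw [e4, e5]
          exact hpairs i hi1 (by omega)
        · funext j
          simp only [hg, hw]
          by_cases h1 : j = 2*t+2
          · rw [if_pos h1, h1]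
          · rw [if_neg h1]
            by_cases h2 : j = 2*t+3
            · rw [if_pos h2, h2]
            · rw [if_neg h2]
              by_cases h3 : 2*t+1 < j
              · rw [if_pos h3]
                exact (hsupp j (by omega)).symm
              · rw [if_neg h3]
      have hfinU : (⋃ p ∈ P, g p '' Avec t (B - (p.1 + p.2))).Finite := by
        apply Set.Finite.biUnion P.finite_toSet
        intro p _
        exact ((ih (B - (p.1 + p.2))).1).image _
      refine ⟨hfinU.subset hsub, ?_⟩
      have step1 : (Avec (t+1) B).ncard ≤ ∑ p ∈ P, (Avec t (B - (p.1 + p.2))).ncard := by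
        calc (Avec (t+1) B).ncard ≤ _ := Set.ncard_le_ncard hsub hfinU
          _ ≤ ∑ p ∈ P, (g p '' Avec t (B - (p.1 + p.2))).ncard := ncard_biUnion_le _ _
          _ ≤ ∑ p ∈ P, (Avec t (B - (p.1 + p.2))).ncard := by
              apply Finset.sum_le_sum
              intro p _
              exact Set.ncard_image_le (ih _).1
      have hq0 : (0:ℝ) < q := by linarith
      set r : ℝ := q⁻¹ with hr
      have hr0 : 0 < r := by positivity
      have step2 : ∀ p ∈ P, ((Avec t (B - (p.1 + p.2))).ncard : ℝ) ≤ q ^ B * r ^ (p.1 + p.2) := by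
        intro p hpP
        have hle : p.1 + p.2 ≤ B := by
          simp only [hP, Finset.mem_filter] at hpP; exact hpP.2.2
        have := (ih (B - (p.1 + p.2))).2
        calc ((Avec t (B - (p.1 + p.2))).ncard : ℝ) ≤ q ^ (B - (p.1 + p.2)) := this
          _ = q ^ B * r ^ (p.1 + p.2) := by
              rw [hr, inv_pow, ← div_eq_mul_inv, eq_div_iff (by positivity), ← pow_add]
              congr 1
              omega
      have step3 : ∑ p ∈ P, q ^ B * r ^ (p.1 + p.2) ≤ q ^ B := by
        rw [← Finset.mul_sum]
        have hsum2 : ∑ p ∈ P, r ^ (p.1 + p.2)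
            ≤ ∑ p ∈ ((Finset.range (B+1) ×ˢ Finset.range (B+1)).erase (0,0)),
                r ^ (p.1 + p.2) := by
          apply Finset.sum_le_sum_of_subset_of_nonneg
          · intro p hp
            simp only [hP, Finset.mem_filter] at hp
            rw [Finset.mem_erase]
            refine ⟨?_, hp.1⟩
            intro h; rw [h] at hp; simp at hp
          · intros; positivity
        have hmem : ((0,0) : ℕ × ℕ) ∈ Finset.range (B+1) ×ˢ Finset.range (B+1) := by
          simp
        have herase : ∑ p ∈ ((Finset.range (B+1) ×ˢ Finset.range (B+1)).erase (0,0)),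
              r ^ (p.1 + p.2)
            = (∑ x ∈ Finset.range (B+1), r ^ x) * (∑ x ∈ Finset.range (B+1), r ^ x) - 1 := by
          rw [Finset.sum_erase_eq_sub hmem]
          rw [Finset.sum_product]
          simp only [pow_add]
          rw [← Finset.sum_mul_sum]
          norm_num
        have hG : ∑ x ∈ Finset.range (B+1), r ^ x ≤ Real.sqrt 2 := geom_bound B
        have hG0 : (0:ℝ) ≤ ∑ x ∈ Finset.range (B+1), r ^ x := by positivity
        have hfinal : ∑ p ∈ P, r ^ (p.1 + p.2) ≤ 1 := by
          rw [herase] at hsum2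
          nlinarith
        calc q ^ B * ∑ p ∈ P, r ^ (p.1 + p.2) ≤ q ^ B * 1 := by
              apply mul_le_mul_of_nonneg_left hfinal (by positivity)
          _ = q ^ B := mul_one _
      calc ((Avec (t+1) B).ncard : ℝ) ≤ ∑ p ∈ P, ((Avec t (B - (p.1 + p.2))).ncard : ℝ) := by
            exact_mod_cast step1
        _ ≤ ∑ p ∈ P, q ^ B * r ^ (p.1 + p.2) := Finset.sum_le_sum step2
        _ ≤ q ^ B := step3

/-- For fixed `t ∈ {1,…,n-1}`, the number of vectors `v` satisfying (i)–(iii) and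
having `t(v) = t` (i.e. `v_{2t} + v_{2t+1} > 0`, and `v_{2t'} + v_{2t'+1} = 0`
for every `t' ∈ {t+1,…,n-1}`) is at most `(2+√2)^n`. -/
theorem stmt3 :
    ∀ n : ℕ, 1 ≤ n → ∀ t : ℕ, 1 ≤ t → t ≤ n - 1 →
      (({v ∈ DNPvec n | 0 < v (2 * t) + v (2 * t + 1) ∧
          ∀ t', t < t' → t' ≤ n - 1 → v (2 * t') + v (2 * t' + 1) = 0}).ncard : ℝ)
        ≤ (2 + Real.sqrt 2) ^ n := by
  intro n hn t ht1 ht2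
  have hsub : {v ∈ DNPvec n | 0 < v (2 * t) + v (2 * t + 1) ∧
      ∀ t', t < t' → t' ≤ n - 1 → v (2 * t') + v (2 * t' + 1) = 0} ⊆ Avec t n := by
    rintro v ⟨⟨hsupp, hsum, _, hchain⟩, hpos, htail⟩
    refine ⟨?_, ?_, ?_⟩
    · intro j hj
      rcases hj with hj | hj
      · exact hsupp j (Or.inl hj)
      · by_cases hbig : 2 * n - 1 < j
        · exact hsupp j (Or.inr hbig)
        · -- 2t+1 < j ≤ 2n-1 : j belongs to a pair (2t', 2t'+1) with t < t' ≤ n-1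
          set t' := j / 2 with ht'
          have hj2 : j = 2 * t' ∨ j = 2 * t' + 1 := by omega
          have h1 : t < t' := by omega
          have h2 : t' ≤ n - 1 := by omega
          have := htail t' h1 h2
          rcases hj2 with h | h <;> rw [h] <;> omega
    · have hIcc : Finset.Icc 1 (2*t+1) ⊆ Finset.Icc 1 (2*n-1) := by
        apply Finset.Icc_subset_Icc_right
        omega
      exact le_trans (Finset.sum_le_sum_of_subset hIcc) hsum
    · intro i hi1 hi2
      by_contra hcon
      have hz : v (2*i) = 0 ∧ v (2*i+1) = 0 := by omega
      rcases eq_or_lt_of_le hi2 with heq | hlt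
      · rw [heq] at hz; omega
      · have hchain' := hchain i hi1 (by omega) hz.1 hz.2
        have hz1 := hchain' (2*t) (by omega)
        have hz2 := hchain' (2*t+1) (by omega)
        omega
  obtain ⟨hfin, hbound⟩ := Avec_finite_bound t n
  calc (({v ∈ DNPvec n | 0 < v (2 * t) + v (2 * t + 1) ∧
          ∀ t', t < t' → t' ≤ n - 1 → v (2 * t') + v (2 * t' + 1) = 0}).ncard : ℝ)
      ≤ ((Avec t n).ncard : ℝ) := by
        exact_mod_cast Set.ncard_le_ncard hsub hfin
    _ ≤ (2 + Real.sqrt 2) ^ n := hbound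
end

section
/- The number of vectors v ∈ ℕ^{2n-1} satisfying conditions (i)–(iii) of the DNP-vector conditions, the bipartite condition (iv) (v_{2i} = 0 for even i ∈ {1,…,n-1} and v_{2i+1} = 0 for odd i ∈ {1,…,n-1}), and additionally ‖v‖₁ ≤ n/2, is O(2^{n/2}). -/
open Finset

namespace Stmt6Aux

/-- partial sums -/
def S (v : ℕ → ℕ) (i : ℕ) : ℕ := ∑ j ∈ Finset.Icc 1 (2 * i + 1), v j

lemma S_mono (v : ℕ → ℕ) : Monotone (S v) := fun i j h =>
  Finset.sum_le_sum_of_subset (Finset.Icc_subset_Icc le_rfl (by omega))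

lemma S_succ (v : ℕ → ℕ) (t : ℕ) :
    S v (t + 1) = S v t + v (2 * t + 2) + v (2 * t + 3) := by
  unfold S
  rw [show 2 * (t + 1) + 1 = (2 * t + 2) + 1 from by ring,
    Finset.sum_Icc_succ_top (by omega),
    show 2 * t + 2 = (2 * t + 1) + 1 from by ring,
    Finset.sum_Icc_succ_top (by omega)]

lemma S_le (n : ℕ) (v : ℕ → ℕ) (h0 : ∀ j, j = 0 ∨ 2 * n - 1 < j → v j = 0) (i : ℕ) :
    S v i ≤ ∑ j ∈ Finset.Icc 1 (2 * n - 1), v j := by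
  apply Finset.sum_le_sum_of_ne_zero
  intro x hx hne
  rw [Finset.mem_Icc] at hx ⊢
  refine ⟨hx.1, ?_⟩
  by_contra h
  exact hne (h0 x (Or.inr (by omega)))

lemma stall (n : ℕ) (v : ℕ → ℕ) (hv : v ∈ DNPvec n) (t : ℕ) (ht : t + 1 < n)
    (hst : S v (t + 1) = S v t) : ∀ j, t ≤ j → j < n → S v j = S v t := by
  obtain ⟨h0, hsum, h1, h3⟩ := hv
  have hrec := S_succ v t
  have hz2 : v (2 * t + 2) = 0 := by omega
  have hz3 : v (2 * t + 3) = 0 := by omega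
  intro j hj hjn
  have hzero : ∀ x ∈ Finset.Icc 1 (2 * j + 1), x ∉ Finset.Icc 1 (2 * t + 1) → v x = 0 := by
    intro x hx1 hx2
    rw [Finset.mem_Icc] at hx1
    rw [Finset.mem_Icc] at hx2
    push_neg at hx2
    have hx : 2 * t + 2 ≤ x := hx2 hx1.1
    rcases Nat.lt_or_ge x (2 * t + 4) with h | h
    · have : x = 2 * t + 2 ∨ x = 2 * t + 3 := by omega
      rcases this with rfl | rfl
      · exact hz2
      · exact hz3
    · have htn : t + 1 ≤ n - 2 := by omega
      refine h3 (t + 1) (by omega) htn ?_ ?_ x (by omega)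
      · rw [show 2 * (t + 1) = 2 * t + 2 from by ring]; exact hz2
      · rw [show 2 * (t + 1) + 1 = 2 * t + 3 from by ring]; exact hz3
  exact (Finset.sum_subset (Finset.Icc_subset_Icc le_rfl (by omega)) hzero).symm

lemma eq_of_image_eq (n : ℕ) (a b : ℕ → ℕ) (ha : Monotone a) (hb : Monotone b)
    (hsa : ∀ t, t + 1 < n → a (t + 1) = a t → ∀ j, t ≤ j → j < n → a j = a t)
    (hsb : ∀ t, t + 1 < n → b (t + 1) = b t → ∀ j, t ≤ j → j < n → b j = b t)
    (him : (Finset.range n).image a = (Finset.range n).image b) :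
    ∀ i, i < n → a i = b i := by
  intro i
  induction i using Nat.strong_induction_on with
  | _ i IH =>
    intro hin
    have hmema : ∀ x < n, a x ∈ (Finset.range n).image b := by
      intro x hx
      rw [← him]
      exact Finset.mem_image_of_mem a (Finset.mem_range.mpr hx)
    have hmemb : ∀ x < n, b x ∈ (Finset.range n).image a := by
      intro x hx
      rw [him]
      exact Finset.mem_image_of_mem b (Finset.mem_range.mpr hx)
    match i with
    | 0 =>
      obtain ⟨t, ht, hteq⟩ := Finset.mem_image.1 (hmema 0 hin)
      obtain ⟨t', ht', hteq'⟩ := Finset.mem_image.1 (hmemb 0 hin)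
      have h1 : b 0 ≤ b t := hb (Nat.zero_le t)
      have h2 : a 0 ≤ a t' := ha (Nat.zero_le t')
      omega
    | k + 1 =>
      have hk := IH k (by omega) (by omega)
      by_cases hca : a (k + 1) = a k
      · have hconst := hsa k hin hca
        obtain ⟨t, ht, hteq⟩ := Finset.mem_image.1 (hmemb (k + 1) hin)
        rw [Finset.mem_range] at ht
        have hat : a t ≤ a k := by
          rcases le_or_gt t k with h | h
          · exact ha h
          · exact le_of_eq (hconst t (by omega) ht)
        have hbk : b k ≤ b (k + 1) := hb (by omega)
        omega
      · by_cases hcb : b (k + 1) = b k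
        · have hconst := hsb k hin hcb
          obtain ⟨t, ht, hteq⟩ := Finset.mem_image.1 (hmema (k + 1) hin)
          rw [Finset.mem_range] at ht
          have hbt : b t ≤ b k := by
            rcases le_or_gt t k with h | h
            · exact hb h
            · exact le_of_eq (hconst t (by omega) ht)
          have hak : a k ≤ a (k + 1) := ha (by omega)
          omega
        · have hak : a k < a (k + 1) := lt_of_le_of_ne (ha (by omega)) (Ne.symm hca)
          have hbk : b k < b (k + 1) := lt_of_le_of_ne (hb (by omega)) (Ne.symm hcb)
          obtain ⟨t, ht, hteq⟩ := Finset.mem_image.1 (hmema (k + 1) hin)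
          rw [Finset.mem_range] at ht
          obtain ⟨t', ht', hteq'⟩ := Finset.mem_image.1 (hmemb (k + 1) hin)
          rw [Finset.mem_range] at ht'
          have h1 : a (k + 1) ≤ b (k + 1) := by
            rcases le_or_gt t' k with h | h
            · have : a t' ≤ a k := ha h
              omega
            · have : a (k + 1) ≤ a t' := ha h
              omega
          have h2 : b (k + 1) ≤ a (k + 1) := by
            rcases le_or_gt t k with h | h
            · have : b t ≤ b k := hb h
              omega
            · have : b (k + 1) ≤ b t := hb h
              omega
          omega

lemma card_bound (n : ℕ) :
    ({v ∈ DNPvec n |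
        (∀ i, 1 ≤ i → i ≤ n - 1 → Even i → v (2 * i) = 0) ∧
        (∀ i, 1 ≤ i → i ≤ n - 1 → Odd i → v (2 * i + 1) = 0) ∧
        2 * (∑ j ∈ Finset.Icc 1 (2 * n - 1), v j) ≤ n}).ncard ≤ 2 ^ (n / 2 + 1) := by
  classical
  set A : Set (ℕ → ℕ) := ({v ∈ DNPvec n |
        (∀ i, 1 ≤ i → i ≤ n - 1 → Even i → v (2 * i) = 0) ∧
        (∀ i, 1 ≤ i → i ≤ n - 1 → Odd i → v (2 * i + 1) = 0) ∧
        2 * (∑ j ∈ Finset.Icc 1 (2 * n - 1), v j) ≤ n}) with hA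
  set F : (ℕ → ℕ) → Finset ℕ := fun v => (Finset.range n).image (S v) with hF
  have hinj : Set.InjOn F A := by
    intro u hu v hv heq
    rcases Nat.eq_zero_or_pos n with rfl | hn
    · funext j
      have hu0 := hu.1.1 j (by omega)
      have hv0 := hv.1.1 j (by omega)
      rw [hu0, hv0]
    · have hS : ∀ i, i < n → S u i = S v i :=
        eq_of_image_eq n (S u) (S v) (S_mono u) (S_mono v)
          (stall n u hu.1) (stall n v hv.1) heq
      funext j
      obtain ⟨i, rfl | rfl⟩ := Nat.even_or_odd' j
      · -- j = 2 * i
        rcases Nat.eq_zero_or_pos i with rfl | hi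
        · have hu0 := hu.1.1 (2 * 0) (Or.inl (by norm_num))
          have hv0 := hv.1.1 (2 * 0) (Or.inl (by norm_num))
          rw [hu0, hv0]
        · rcases Nat.lt_or_ge i n with hiltn | hige
          · -- 1 ≤ i ≤ n - 1
            obtain ⟨t, rfl⟩ : ∃ t, i = t + 1 := ⟨i - 1, by omega⟩
            have hc1 := hS t (by omega)
            have hc2 := hS (t + 1) (by omega)
            have hru := S_succ u t
            have hrv := S_succ v t
            have h2i : 2 * (t + 1) = 2 * t + 2 := by ring
            have h2i1 : 2 * (t + 1) + 1 = 2 * t + 3 := by ring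
            rw [h2i]
            rcases Nat.even_or_odd (t + 1) with hpar | hpar
            · have hz1 : u (2 * (t + 1)) = 0 := hu.2.1 (t + 1) (by omega) (by omega) hpar
              have hz2 : v (2 * (t + 1)) = 0 := hv.2.1 (t + 1) (by omega) (by omega) hpar
              rw [h2i] at hz1 hz2
              rw [hz1, hz2]
            · have hz1 : u (2 * (t + 1) + 1) = 0 := hu.2.2.1 (t + 1) (by omega) (by omega) hpar
              have hz2 : v (2 * (t + 1) + 1) = 0 := hv.2.2.1 (t + 1) (by omega) (by omega) hpar
              rw [h2i1] at hz1 hz2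
              omega
          · have hu0 := hu.1.1 (2 * i) (Or.inr (by omega))
            have hv0 := hv.1.1 (2 * i) (Or.inr (by omega))
            rw [hu0, hv0]
      · -- j = 2 * i + 1
        rcases Nat.eq_zero_or_pos i with rfl | hi
        · have h1 : u (2 * 0 + 1) = S u 0 := by simp [S]
          have h2 : v (2 * 0 + 1) = S v 0 := by simp [S]
          rw [h1, h2, hS 0 hn]
        · rcases Nat.lt_or_ge i n with hiltn | hige
          · obtain ⟨t, rfl⟩ : ∃ t, i = t + 1 := ⟨i - 1, by omega⟩
            have hc1 := hS t (by omega)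
            have hc2 := hS (t + 1) (by omega)
            have hru := S_succ u t
            have hrv := S_succ v t
            have h2i : 2 * (t + 1) = 2 * t + 2 := by ring
            have h2i1 : 2 * (t + 1) + 1 = 2 * t + 3 := by ring
            rw [h2i1]
            rcases Nat.even_or_odd (t + 1) with hpar | hpar
            · have hz1 : u (2 * (t + 1)) = 0 := hu.2.1 (t + 1) (by omega) (by omega) hpar
              have hz2 : v (2 * (t + 1)) = 0 := hv.2.1 (t + 1) (by omega) (by omega) hpar
              rw [h2i] at hz1 hz2
              omega
            · have hz1 : u (2 * (t + 1) + 1) = 0 := hu.2.2.1 (t + 1) (by omega) (by omega) hpar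
              have hz2 : v (2 * (t + 1) + 1) = 0 := hv.2.2.1 (t + 1) (by omega) (by omega) hpar
              rw [h2i1] at hz1 hz2
              rw [hz1, hz2]
          · have hu0 := hu.1.1 (2 * i + 1) (Or.inr (by omega))
            have hv0 := hv.1.1 (2 * i + 1) (Or.inr (by omega))
            rw [hu0, hv0]
  have hsub : F '' A ⊆ ↑((Finset.Icc 0 (n / 2)).powerset) := by
    rintro _ ⟨v, hv, rfl⟩
    simp only [Finset.coe_powerset, Set.mem_preimage, Set.mem_powerset_iff]
    intro x hx
    simp only [hF, Finset.coe_image] at hx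
    obtain ⟨i, hi, rfl⟩ := hx
    simp only [Finset.coe_Icc, Set.mem_Icc]
    refine ⟨Nat.zero_le _, ?_⟩
    have h1 := S_le n v hv.1.1 i
    have h2 := hv.2.2.2
    omega
  calc A.ncard = (F '' A).ncard := (Set.ncard_image_of_injOn hinj).symm
    _ ≤ (↑((Finset.Icc 0 (n / 2)).powerset) : Set (Finset ℕ)).ncard :=
        Set.ncard_le_ncard hsub (Finset.finite_toSet _)
    _ = ((Finset.Icc 0 (n / 2)).powerset).card := Set.ncard_coe_finset _
    _ = 2 ^ (n / 2 + 1) := by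
        rw [Finset.card_powerset, Nat.card_Icc]; norm_num

lemma pow_half_le (n : ℕ) : (2:ℝ) ^ (n / 2 + 1) ≤ 2 * Real.sqrt 2 ^ n := by
  have hsqrt2 : Real.sqrt 2 ^ 2 = 2 := Real.sq_sqrt (by norm_num)
  have hone : (1 : ℝ) ≤ Real.sqrt 2 := by nlinarith [Real.sqrt_nonneg 2]
  have h1 : (2 : ℝ) ^ (n / 2) = Real.sqrt 2 ^ (2 * (n / 2)) := by
    rw [pow_mul, hsqrt2]
  have hle : 2 * (n / 2) ≤ n := by omega
  have h2 : Real.sqrt 2 ^ (2 * (n / 2)) ≤ Real.sqrt 2 ^ n :=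
    pow_le_pow_right₀ hone hle
  rw [pow_succ]
  nlinarith [h2]

end Stmt6Aux

/-- The number of vectors `v` satisfying (i)–(iii), the bipartite condition (iv)
(`v_{2i} = 0` for even `i ∈ {1,…,n-1}`, `v_{2i+1} = 0` for odd `i ∈ {1,…,n-1}`),
and `‖v‖₁ ≤ n/2`, is `O(2^{n/2})`, i.e. at most `C · (√2)^n` for an absolute
constant `C`. -/
theorem stmt6 :
    ∃ C : ℝ, ∀ n : ℕ,
      (({v ∈ DNPvec n |
          (∀ i, 1 ≤ i → i ≤ n - 1 → Even i → v (2 * i) = 0) ∧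
          (∀ i, 1 ≤ i → i ≤ n - 1 → Odd i → v (2 * i + 1) = 0) ∧
          2 * (∑ j ∈ Finset.Icc 1 (2 * n - 1), v j) ≤ n}).ncard : ℝ)
        ≤ C * Real.sqrt 2 ^ n := by
  refine ⟨2, fun n => ?_⟩
  have hb := Stmt6Aux.card_bound n
  refine le_trans ?_ (Stmt6Aux.pow_half_le n)
  calc _ ≤ ((2 ^ (n / 2 + 1) : ℕ) : ℝ) := by exact_mod_cast hb
    _ = (2:ℝ) ^ (n / 2 + 1) := by push_cast; ring
end

section
/- Let δ be the solution to the DNP-game equations on a directed graph with n nodes and discount λ ∈ (0,1). Then for every node v, δ(v) ∈ {λ^i : 0 ≤ i ≤ n-1} ∪ {0} ∪ {-λ^i : 0 ≤ i ≤ n-1}. -/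
/-- `δ : V → ℝ` solves the optimality equations of the discounted normal play
game on the directed graph `E` with Max-nodes `isMax` and discount `lam`:
`δ(s) = -1` on Max-sinks, `δ(s) = 1` on Min-sinks,
`δ(a) = λ · max_{(a,b) ∈ E} δ(b)` on non-sink Max nodes and
`δ(a) = λ · min_{(a,b) ∈ E} δ(b)` on non-sink Min nodes. -/
def DNPsol {V : Type*} (E : V → V → Prop) (isMax : V → Prop) (lam : ℝ)
    (δ : V → ℝ) : Prop :=
  (∀ a, isMax a → (∀ b, ¬E a b) → δ a = -1) ∧
  (∀ a, ¬isMax a → (∀ b, ¬E a b) → δ a = 1) ∧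
  (∀ a, isMax a → (∃ b, E a b) →
    ∃ b, E a b ∧ δ a = lam * δ b ∧ ∀ c, E a c → δ c ≤ δ b) ∧
  (∀ a, ¬isMax a → (∃ b, E a b) →
    ∃ b, E a b ∧ δ a = lam * δ b ∧ ∀ c, E a c → δ b ≤ δ c)

/-- Any solution of the DNP-game equations on a graph with `n` nodes takes
values in `{λ^i : 0 ≤ i ≤ n-1} ∪ {0} ∪ {-λ^i : 0 ≤ i ≤ n-1}`. -/
theorem stmt9 {V : Type*} [Fintype V] (E : V → V → Prop) (isMax : V → Prop)
    (lam : ℝ) (hlam0 : 0 < lam) (hlam1 : lam < 1) (δ : V → ℝ)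
    (hδ : DNPsol E isMax lam δ) :
    ∀ v : V, δ v = 0 ∨
      ∃ i : ℕ, i ≤ Fintype.card V - 1 ∧ (δ v = lam ^ i ∨ δ v = -lam ^ i) := by
  classical
  obtain ⟨h1, h2, h3, h4⟩ := hδ
  have key : ∀ k : ℕ, ∀ v : V,
      (Finset.univ.filter (fun w => |δ v| < |δ w|)).card = k →
      δ v = 0 ∨ ∃ i : ℕ,
        i < (Finset.univ.filter (fun w => |δ v| ≤ |δ w|)).card ∧
        (δ v = lam ^ i ∨ δ v = -lam ^ i) := by
    intro k
    induction k using Nat.strong_induction_on with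
    | _ k ih =>
      intro v hk
      by_cases hsink : ∀ b, ¬ E v b
      · have hval : δ v = -1 ∨ δ v = 1 := by
          by_cases hmax : isMax v
          · exact Or.inl (h1 v hmax hsink)
          · exact Or.inr (h2 v hmax hsink)
        refine Or.inr ⟨0, ?_, ?_⟩
        · exact Finset.card_pos.mpr ⟨v, by simp⟩
        · rcases hval with h | h
          · exact Or.inr (by simp [h])
          · exact Or.inl (by simp [h])
      · push_neg at hsink
        obtain ⟨b, hb, heq⟩ : ∃ b, E v b ∧ δ v = lam * δ b := by
          by_cases hmax : isMax v
          · obtain ⟨b, hb, heq, _⟩ := h3 v hmax hsink; exact ⟨b, hb, heq⟩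
          · obtain ⟨b, hb, heq, _⟩ := h4 v hmax hsink; exact ⟨b, hb, heq⟩
        by_cases hz : δ v = 0
        · exact Or.inl hz
        have hbz : δ b ≠ 0 := by
          intro h; exact hz (by simp [heq, h])
        have hbpos : 0 < |δ b| := abs_pos.mpr hbz
        have habs : |δ v| = lam * |δ b| := by
          rw [heq, abs_mul, abs_of_pos hlam0]
        have hlt : |δ v| < |δ b| := by nlinarith
        have hsub : Finset.univ.filter (fun w => |δ b| < |δ w|) ⊂
            Finset.univ.filter (fun w => |δ v| < |δ w|) := by
          constructor
          · intro w hw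
            simp only [Finset.mem_filter, Finset.mem_univ, true_and] at *
            exact lt_trans hlt hw
          · intro h
            have hbmem : b ∈ Finset.univ.filter (fun w => |δ v| < |δ w|) := by
              simp [hlt]
            have := h hbmem
            simp only [Finset.mem_filter, Finset.mem_univ, true_and] at this
            exact lt_irrefl _ this
        have hcard : (Finset.univ.filter (fun w => |δ b| < |δ w|)).card < k :=
          hk ▸ Finset.card_lt_card hsub
        rcases ih _ hcard b rfl with h0 | ⟨i, hi, hcase⟩
        · exact absurd h0 hbz
        have hsub2 : Finset.univ.filter (fun w => |δ b| ≤ |δ w|) ⊂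
            Finset.univ.filter (fun w => |δ v| ≤ |δ w|) := by
          constructor
          · intro w hw
            simp only [Finset.mem_filter, Finset.mem_univ, true_and] at *
            exact le_trans hlt.le hw
          · intro h
            have hvmem : v ∈ Finset.univ.filter (fun w => |δ v| ≤ |δ w|) := by
              simp
            have := h hvmem
            simp only [Finset.mem_filter, Finset.mem_univ, true_and] at this
            exact absurd this (not_le.mpr hlt)
        refine Or.inr ⟨i + 1, ?_, ?_⟩
        · have := Finset.card_lt_card hsub2
          omega
        · rcases hcase with h | h
          · exact Or.inl (by rw [heq, h, pow_succ]; ring)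
          · exact Or.inr (by rw [heq, h, pow_succ]; ring)
  intro v
  rcases key _ v rfl with h0 | ⟨i, hi, hcase⟩
  · exact Or.inl h0
  · refine Or.inr ⟨i, ?_, hcase⟩
    have hle : (Finset.univ.filter (fun w => |δ v| ≤ |δ w|)).card ≤
        Fintype.card V := by
      simpa using Finset.card_filter_le Finset.univ (fun w => |δ v| ≤ |δ w|)
    omega
end

section
/- Let δ be the solution to the DNP-game equations with discount λ ∈ (0,1) on a finite directed acyclic graph. Then δ(v) ≠ 0 for every node v. -/
lemma transGen_path {V : Type*} (E : V → V → Prop) {a b : V}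
    (h : Relation.TransGen E a b) :
    ∃ (c : ℕ → V) (l : ℕ), 1 ≤ l ∧ (∀ i, i < l → E (c i) (c (i + 1))) ∧
      c 0 = a ∧ c l = b := by
  induction h with
  | @single d h =>
      refine ⟨fun i => if i = 0 then a else d, 1, le_refl 1, ?_, by simp, by simp⟩
      intro i hi
      interval_cases i
      simpa using h
  | @tail b' d hab hbd ih =>
      obtain ⟨c, l, hl, hedge, hc0, hcl⟩ := ih
      refine ⟨fun i => if i ≤ l then c i else d, l + 1, by omega, ?_,
        by simp [hc0], by simp⟩
      intro i hi
      rcases lt_or_eq_of_le (Nat.lt_succ_iff.mp hi) with h1 | h1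
      · simp only [if_pos (le_of_lt h1), if_pos (Nat.succ_le_of_lt h1)]
        exact hedge i h1
      · simp only [h1, le_refl, if_pos, if_neg (by omega : ¬ l + 1 ≤ l), hcl]
        exact hbd

/-- On a finite directed acyclic graph, any solution of the DNP-game equations
with discount `λ ∈ (0,1)` is nonzero at every node. -/
theorem stmt11 {V : Type*} [Fintype V] (E : V → V → Prop) (isMax : V → Prop)
    (lam : ℝ) (hlam0 : 0 < lam) (hlam1 : lam < 1) (δ : V → ℝ)
    (hδ : DNPsol E isMax lam δ)
    (hacyc : ∀ (c : ℕ → V) (l : ℕ), 1 ≤ l →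
      (∀ i, i < l → E (c i) (c (i + 1))) → c l ≠ c 0) :
    ∀ v : V, δ v ≠ 0 := by
  have hirr : ∀ a : V, ¬ Relation.TransGen E a a := by
    intro a ha
    obtain ⟨c, l, hl, hedge, hc0, hcl⟩ := transGen_path E ha
    exact hacyc c l hl hedge (by rw [hc0, hcl])
  have hwf : WellFounded (fun b a : V => E a b) := by
    have : WellFounded (fun b a : V => Relation.TransGen E a b) := by
      have : IsIrrefl V (fun b a : V => Relation.TransGen E a b) :=
        ⟨fun a h => hirr a h⟩
      have : IsTrans V (fun b a : V => Relation.TransGen E a b) :=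
        ⟨fun a b c h1 h2 => h2.trans h1⟩
      exact Finite.wellFounded_of_trans_of_irrefl _
    exact Subrelation.wf (fun h => Relation.TransGen.single h) this
  obtain ⟨hmaxsink, hminsink, hmax, hmin⟩ := hδ
  intro v
  induction v using hwf.induction with
  | _ v ih =>
    by_cases hsink : ∃ b, E v b
    · by_cases hM : isMax v
      · obtain ⟨b, hvb, heq, -⟩ := hmax v hM hsink
        rw [heq]
        exact mul_ne_zero (ne_of_gt hlam0) (ih b hvb)
      · obtain ⟨b, hvb, heq, -⟩ := hmin v hM hsink
        rw [heq]
        exact mul_ne_zero (ne_of_gt hlam0) (ih b hvb)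
    · push_neg at hsink
      by_cases hM : isMax v
      · rw [hmaxsink v hM hsink]; norm_num
      · rw [hminsink v hM hsink]; norm_num
end

section
/- Let δ be the solution to the DNP-game equations with discount λ ∈ (0,1) on a finite directed graph with n nodes. For each i ∈ {0,…,n-1}, if the set {a : δ(a) = λ^i} is empty, then the set {a : δ(a) = λ^j} is empty for every j ∈ {i+1,…,n-1}. -/
/-- For a DNP-game solution `δ` on a graph with `n` nodes: if no node has value
`λ^i`, then no node has value `λ^j` for any `j ∈ {i+1,…,n-1}`. -/
theorem stmt12 {V : Type*} [Fintype V] (E : V → V → Prop) (isMax : V → Prop)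
    (lam : ℝ) (hlam0 : 0 < lam) (hlam1 : lam < 1) (δ : V → ℝ)
    (hδ : DNPsol E isMax lam δ) :
    ∀ i, i ≤ Fintype.card V - 1 → {a : V | δ a = lam ^ i} = ∅ →
      ∀ j, i + 1 ≤ j → j ≤ Fintype.card V - 1 → {a : V | δ a = lam ^ j} = ∅ := by
  obtain ⟨hms, hns, hmv, hnv⟩ := hδ
  have step : ∀ m, {a : V | δ a = lam ^ m} = ∅ → {a : V | δ a = lam ^ (m+1)} = ∅ := by
    intro m hm
    ext a; simp only [Set.mem_setOf_eq, Set.mem_empty_iff_false, iff_false]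
    intro ha
    have hpos : 0 < lam ^ (m+1) := pow_pos hlam0 _
    have hlt : lam ^ (m+1) < 1 := pow_lt_one₀ hlam0.le hlam1 (Nat.succ_ne_zero m)
    have hne : ∃ b, E a b := by
      by_contra h
      push_neg at h
      by_cases hx : isMax a
      · have := hms a hx h; rw [ha] at this; linarith
      · have := hns a hx h; rw [ha] at this; linarith
    have : ∃ b, E a b ∧ δ a = lam * δ b := by
      by_cases hx : isMax a
      · obtain ⟨b, hb, heq, _⟩ := hmv a hx hne; exact ⟨b, hb, heq⟩
      · obtain ⟨b, hb, heq, _⟩ := hnv a hx hne; exact ⟨b, hb, heq⟩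
    obtain ⟨b, _, heq⟩ := this
    have hb : δ b = lam ^ m := by
      have : lam * lam ^ m = lam * δ b := by
        rw [← heq, ha, pow_succ]; ring
      exact (mul_left_cancel₀ hlam0.ne' this).symm
    have : b ∈ ({a : V | δ a = lam ^ m} : Set V) := hb
    rw [hm] at this; exact this
  intro i _ hi j hij _
  have key : ∀ k, {a : V | δ a = lam ^ (i + 1 + k)} = ∅ := by
    intro k
    induction k with
    | zero => exact step i hi
    | succ k ih =>
        have h : i + 1 + (k + 1) = (i + 1 + k) + 1 := by omega
        rw [h]
        exact step _ ih
  obtain ⟨k, rfl⟩ := Nat.exists_eq_add_of_le hij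
  exact key k
end

section
/- Let G be a finite bipartite directed graph (every edge goes from V_Max to V_Min or vice versa), let λ ∈ (0,1), and let δ be the solution to the DNP-game equations. Then for every i ∈ {0,…,n-1}: every node a with δ(a) = λ^i lies in V_Min if i is even and in V_Max if i is odd. -/
/-- On a finite bipartite graph (every edge joins a Max node and a Min node),
for any DNP-game solution `δ` and any `i ∈ {0,…,n-1}`: a node with value
`λ^i` is a Min node if `i` is even and a Max node if `i` is odd. -/
theorem stmt16 {V : Type*} [Fintype V] (E : V → V → Prop) (isMax : V → Prop)
    (lam : ℝ) (hlam0 : 0 < lam) (hlam1 : lam < 1)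
    (hbip : ∀ a b, E a b → (isMax a ↔ ¬isMax b))
    (δ : V → ℝ) (hδ : DNPsol E isMax lam δ) :
    ∀ i, i ≤ Fintype.card V - 1 → ∀ a : V, δ a = lam ^ i →
      (Even i → ¬isMax a) ∧ (Odd i → isMax a) := by
  classical
  obtain ⟨hMs, hms, hMn, hmn⟩ := hδ
  -- boundedness: |δ a| ≤ 1 for all a
  have hbd : ∀ a : V, |δ a| ≤ 1 := by
    by_contra h
    push_neg at h
    obtain ⟨a0, ha0⟩ := h
    obtain ⟨m, -, hm⟩ := Finset.exists_max_image (Finset.univ : Finset V)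
      (fun x => |δ x|) ⟨a0, Finset.mem_univ a0⟩
    have hm1 : 1 < |δ m| := lt_of_lt_of_le ha0 (hm a0 (Finset.mem_univ a0))
    have hstep : ∃ b, δ m = lam * δ b := by
      by_cases hs : ∃ b, E m b
      · by_cases hM : isMax m
        · obtain ⟨b, -, hb, -⟩ := hMn m hM hs; exact ⟨b, hb⟩
        · obtain ⟨b, -, hb, -⟩ := hmn m hM hs; exact ⟨b, hb⟩
      · push_neg at hs
        by_cases hM : isMax m
        · have := hMs m hM hs; rw [this] at hm1; norm_num at hm1
        · have := hms m hM hs; rw [this] at hm1; norm_num at hm1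
    obtain ⟨b, hb⟩ := hstep
    have : |δ m| = lam * |δ b| := by
      rw [hb, abs_mul, abs_of_pos hlam0]
    nlinarith [hm b (Finset.mem_univ b), abs_nonneg (δ b)]
  -- main claim by induction on i (the bound on i is not needed)
  have main : ∀ i, ∀ a : V, δ a = lam ^ i →
      (Even i → ¬isMax a) ∧ (Odd i → isMax a) := by
    intro i
    induction i with
    | zero =>
      intro a ha
      refine ⟨fun _ hM => ?_, fun ho => absurd ho (by simp)⟩
      simp only [pow_zero] at ha
      by_cases hs : ∃ b, E a b
      · obtain ⟨b, -, hb, -⟩ := hMn a hM hs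
        have hb1 : δ b ≤ 1 := le_trans (le_abs_self _) (hbd b)
        have : δ a < 1 := by
          rw [hb]
          calc lam * δ b ≤ lam * 1 := mul_le_mul_of_nonneg_left hb1 hlam0.le
            _ < 1 := by rw [mul_one]; exact hlam1
        linarith [ha]
      · push_neg at hs
        have := hMs a hM hs
        rw [this] at ha; norm_num at ha
    | succ n ih =>
      intro a ha
      have hpos : (0:ℝ) < lam ^ (n+1) := pow_pos hlam0 _
      have hlt1 : lam ^ (n+1) < 1 := pow_lt_one₀ hlam0.le hlam1 (Nat.succ_ne_zero n)
      have hs : ∃ b, E a b := by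
        by_contra hns
        push_neg at hns
        by_cases hM : isMax a
        · have := hMs a hM hns; rw [this] at ha; linarith
        · have := hms a hM hns; rw [this] at ha; linarith
      have hstep : ∃ b, E a b ∧ δ a = lam * δ b := by
        by_cases hM : isMax a
        · obtain ⟨b, hE, hb, -⟩ := hMn a hM hs; exact ⟨b, hE, hb⟩
        · obtain ⟨b, hE, hb, -⟩ := hmn a hM hs; exact ⟨b, hE, hb⟩
      obtain ⟨b, hE, hb⟩ := hstep
      have hbn : δ b = lam ^ n := by
        have : lam * δ b = lam * lam ^ n := by
          rw [← hb, ha, pow_succ]; ring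
        exact mul_left_cancel₀ hlam0.ne' this
      have hIH := ih b hbn
      have hflip := hbip a b hE
      constructor
      · intro he hM
        have hOn : Odd n := Nat.odd_iff.mpr (by have := Nat.even_iff.mp he; omega)
        exact (hflip.mp hM) (hIH.2 hOn)
      · intro ho
        have hEn : Even n := Nat.even_iff.mpr (by have := Nat.odd_iff.mp ho; omega)
        exact hflip.mpr (hIH.1 hEn)
  intro i _ a ha
  exact main i a ha
end

section
/- Let x be a point of the polyhedron of potentials of a finite bipartite energy game with no zero cycles, let δ_x be the DNP-game solution on the tight-edge graph G_x, and let χ⁺ be the characteristic vector of V⁺ = {a : δ_x(a) > 0}. Then χ⁺ is a feasible shift for x: for every edge (a,b) tight for x, χ⁺(a) ≥ χ⁺(b) if a ∈ V_Max and χ⁺(a) ≤ χ⁺(b) if a ∈ V_Min; consequently x + εχ⁺ lies in the polyhedron of potentials for all sufficiently small ε > 0. -/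
open Classical in
/-- Lemma (feasible shift for energy games). Let `x` lie in the polyhedron of
potentials of a finite bipartite energy game with no zero cycles, let `δ` be
the DNP-game solution (discount `1/2`) on the graph of edges tight for `x`,
and let `χ⁺` be the characteristic vector of `{a | δ a > 0}`. Then `χ⁺`
respects all tight edges, and consequently `x + ε·χ⁺` lies in the polyhedron
of potentials for all sufficiently small `ε > 0`. -/
theorem stmt17 {V : Type*} [Fintype V] (E : V → V → Prop) (w : V → V → ℝ)
    (isMax : V → Prop)
    (hbip : ∀ a b, E a b → (isMax a ↔ ¬isMax b))
    (hnozero : ∀ (c : ℕ → V) (l : ℕ), 1 ≤ l →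
      (∀ i, i < l → E (c i) (c (i + 1))) → c l = c 0 →
      ∑ i ∈ Finset.range l, w (c i) (c (i + 1)) ≠ 0)
    (x : V → ℝ)
    (hmax : ∀ a b, E a b → isMax a → w a b + x b ≤ x a)
    (hmin : ∀ a b, E a b → ¬isMax a → x a ≤ w a b + x b)
    (δ : V → ℝ)
    (hδ : DNPsol (fun a b => E a b ∧ x a = w a b + x b) isMax (1 / 2) δ) :
    (∀ a b, E a b → x a = w a b + x b →
      (isMax a → (if 0 < δ b then (1 : ℝ) else 0) ≤ (if 0 < δ a then 1 else 0)) ∧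
      (¬isMax a → (if 0 < δ a then (1 : ℝ) else 0) ≤ (if 0 < δ b then 1 else 0))) ∧
    ∃ ε₀ : ℝ, 0 < ε₀ ∧ ∀ ε : ℝ, 0 < ε → ε ≤ ε₀ →
      (∀ a b, E a b → isMax a →
        w a b + (x b + ε * (if 0 < δ b then 1 else 0)) ≤
          x a + ε * (if 0 < δ a then 1 else 0)) ∧
      (∀ a b, E a b → ¬isMax a →
        x a + ε * (if 0 < δ a then 1 else 0) ≤
          w a b + (x b + ε * (if 0 < δ b then 1 else 0))) := by

  classical
  obtain ⟨h1, h2, h3, h4⟩ := hδ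
  -- Part 1
  have part1 : ∀ a b, E a b → x a = w a b + x b →
      (isMax a → (if 0 < δ b then (1 : ℝ) else 0) ≤ (if 0 < δ a then 1 else 0)) ∧
      (¬isMax a → (if 0 < δ a then (1 : ℝ) else 0) ≤ (if 0 < δ b then 1 else 0)) := by
    intro a b hE ht
    constructor
    · intro hMa
      by_cases hb : 0 < δ b
      · obtain ⟨b', hb', heq, hmb⟩ := h3 a hMa ⟨b, hE, ht⟩
        have : 0 < δ a := by
          have := hmb b ⟨hE, ht⟩
          rw [heq]; linarith
        simp [hb, this]
      · simp [hb]
        split <;> norm_num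
    · intro hMa
      by_cases ha : 0 < δ a
      · obtain ⟨b', hb', heq, hmb⟩ := h4 a hMa ⟨b, hE, ht⟩
        have : 0 < δ b := by
          have := hmb b ⟨hE, ht⟩
          linarith
        simp [ha, this]
      · simp [ha]
        split <;> norm_num
  refine ⟨part1, ?_⟩
  -- slack function
  set g : V × V → ℝ := fun p =>
    if x p.1 = w p.1 p.2 + x p.2 then 1 else |x p.1 - w p.1 p.2 - x p.2| with hg
  have hgpos : ∀ p : V × V, 0 < g p := by
    intro p
    simp only [hg]
    split
    · norm_num
    · rename_i h
      have : x p.1 - w p.1 p.2 - x p.2 ≠ 0 := by intro h'; apply h; linarith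
      exact abs_pos.mpr this
  set S : Finset ℝ := insert 1 ((Finset.univ : Finset (V × V)).image g) with hS
  have hSne : S.Nonempty := ⟨1, Finset.mem_insert_self _ _⟩
  refine ⟨S.min' hSne, ?_, ?_⟩
  · apply lt_of_lt_of_le _ (le_refl (S.min' hSne))
    rcases Finset.mem_insert.mp (S.min'_mem hSne) with h | h
    · rw [h]; norm_num
    · obtain ⟨p, _, hp⟩ := Finset.mem_image.mp h
      rw [← hp]; exact hgpos p
  · intro ε hε hε0
    have hεg : ∀ p : V × V, ε ≤ g p := by
      intro p
      exact le_trans hε0 (Finset.min'_le _ _ (Finset.mem_insert_of_mem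
        (Finset.mem_image_of_mem g (Finset.mem_univ p))))
    have hind : ∀ v : V, (0:ℝ) ≤ (if 0 < δ v then (1:ℝ) else 0) ∧
        (if 0 < δ v then (1:ℝ) else 0) ≤ 1 := by
      intro v; constructor <;> (split <;> norm_num)
    constructor
    · intro a b hE hMa
      by_cases ht : x a = w a b + x b
      · have h := (part1 a b hE ht).1 hMa
        have := mul_le_mul_of_nonneg_left h (le_of_lt hε)
        linarith
      · have hs : ε ≤ g (a, b) := hεg (a, b)
        have hle := hmax a b hE hMa
        have habs : 0 < x a - w a b - x b := by
          rcases lt_or_eq_of_le hle with h | h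
          · linarith
          · exact absurd h.symm ht
        have : g (a, b) = x a - w a b - x b := by
          simp only [hg]
          rw [if_neg ht]
          exact abs_of_pos habs
        rw [this] at hs
        have h1 := (hind a).1
        have h2 := (hind b).2
        nlinarith
    · intro a b hE hMa
      by_cases ht : x a = w a b + x b
      · have h := (part1 a b hE ht).2 hMa
        have := mul_le_mul_of_nonneg_left h (le_of_lt hε)
        linarith
      · have hs : ε ≤ g (a, b) := hεg (a, b)
        have hle := hmin a b hE hMa
        have : g (a, b) = w a b + x b - x a := by
          simp only [hg]
          rw [if_neg ht]
          rw [abs_of_nonpos (by linarith)]; ring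
        rw [this] at hs
        have h1 := (hind a).2
        have h2 := (hind b).1
        nlinarith
end

section
/- Let G = (V,E) be a finite directed graph in which every node has an outgoing edge, with weight function w, and let σ be a Max positional strategy and τ a Min positional strategy. If some node v is winning for Max (via some strategy, all cycles reachable from v in G^σ are non-negative) and also winning for Min (via some strategy, all cycles reachable from v in G_τ are negative), then there is a contradiction; i.e., no node can be simultaneously winning for both players in an energy game. -/
/-- No node of an energy game can be winning for both players. Let every node
have an outgoing edge, let `σ` be a Max positional strategy and `τ` a Min
positional strategy (given as successor choices along edges). If from `v`
every cycle reachable in `G^σ` (edges consistent with `σ`) has non-negative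
weight, while every cycle reachable in `G_τ` (edges consistent with `τ`) has
negative weight, we get a contradiction. -/
theorem stmt18 {V : Type*} [Fintype V] (E : V → V → Prop) (w : V → V → ℝ)
    (isMax : V → Prop)
    (hout : ∀ a : V, ∃ b, E a b)
    (σ : V → V) (hσ : ∀ a, isMax a → E a (σ a))
    (τ : V → V) (hτ : ∀ a, ¬isMax a → E a (τ a))
    (v : V)
    (hMaxWin : ∀ (c : ℕ → V) (l : ℕ), 1 ≤ l →
      Relation.ReflTransGen (fun a b => E a b ∧ (isMax a → b = σ a)) v (c 0) →
      (∀ i, i < l → E (c i) (c (i + 1)) ∧ (isMax (c i) → c (i + 1) = σ (c i))) →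
      c l = c 0 →
      0 ≤ ∑ i ∈ Finset.range l, w (c i) (c (i + 1)))
    (hMinWin : ∀ (c : ℕ → V) (l : ℕ), 1 ≤ l →
      Relation.ReflTransGen (fun a b => E a b ∧ (¬isMax a → b = τ a)) v (c 0) →
      (∀ i, i < l → E (c i) (c (i + 1)) ∧ (¬isMax (c i) → c (i + 1) = τ (c i))) →
      c l = c 0 →
      ∑ i ∈ Finset.range l, w (c i) (c (i + 1)) < 0) :
    False := by
  classical
  set f : V → V := fun a => if isMax a then σ a else τ a with hf
  have hEf : ∀ a, E a (f a) := by
    intro a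
    by_cases h : isMax a <;> simp [hf, h, hσ a, hτ a]
  have hfmax : ∀ a, isMax a → f a = σ a := by
    intro a h; simp [hf, h]
  have hfmin : ∀ a, ¬isMax a → f a = τ a := by
    intro a h; simp [hf, h]
  obtain ⟨i, j, hne, heq⟩ :=
    Finite.exists_ne_map_eq_of_infinite (fun n : ℕ => f^[n] v)
  wlog hij : i < j generalizing i j
  · exact this j i hne.symm heq.symm (by omega)
  set c : ℕ → V := fun n => f^[i + n] v with hc
  have hstep : ∀ n, c (n + 1) = f (c n) := by
    intro n
    simp only [hc, Nat.add_succ]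
    rw [Function.iterate_succ_apply']
  have hc0 : c 0 = f^[i] v := by simp [hc]
  have hcyc : c (j - i) = c 0 := by
    simp only [hc]
    rw [Nat.add_sub_cancel' hij.le, Nat.add_zero]
    exact heq.symm
  have hl : 1 ≤ j - i := by omega
  have hreach : ∀ (R : V → V → Prop), (∀ a, R a (f a)) →
      ∀ n, Relation.ReflTransGen R v (f^[n] v) := by
    intro R hR n
    induction n with
    | zero => exact .refl
    | succ n ih => rw [Function.iterate_succ_apply']; exact ih.tail (hR _)
  have h1 := hMaxWin c (j - i) hl
    (by rw [hc0]; exact hreach _ (fun a => ⟨hEf a, fun h => hfmax a h⟩) i)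
    (fun k _ => by rw [hstep k]; exact ⟨hEf _, fun h => hfmax _ h⟩) hcyc
  have h2 := hMinWin c (j - i) hl
    (by rw [hc0]; exact hreach _ (fun a => ⟨hEf a, fun h => hfmin a h⟩) i)
    (fun k _ => by rw [hstep k]; exact ⟨hEf _, fun h => hfmin _ h⟩) hcyc
  linarith
end
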